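/- Let A be a finite-dimensional algebra, a ∈ A an element such that θ_a : aA → Hom_A(Aa, A) (given by θ_a(ax)(y) = yx) is an isomorphism, and let b ∈ A. Then θ_a induces a k-linear isomorphism (aA ∩ Ab)/(aAb) ≅ Hom-underline_A(Aa, Ab), where Hom-underline_A(Aa, Ab) = Hom_A(Aa, Ab)/P(Aa, Ab) is the quotient by homomorphisms factoring through a projective module. -/

import Mathlib

universe u v

/-- A factorization of `f` through a projective module. -/
structure ProjFactorization (A : Type v) {X Y : Type v} [Ring A] [AddCommGroup X] [Module A X]
    [AddCommGroup Y] [Module A Y] (f : X →ₗ[A] Y) : Type (v + 1) where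
  Q : Type v
  [acg : AddCommGroup Q]
  [mod : Module A Q]
  proj : Module.Projective A Q
  g : X →ₗ[A] Q
  h : Q →ₗ[A] Y
  fac : f = h.comp g

/-- `f` factors through a projective module. -/
def FactorsThroughProjective (A : Type v) {X Y : Type v} [Ring A] [AddCommGroup X] [Module A X]
    [AddCommGroup Y] [Module A Y] (f : X →ₗ[A] Y) : Prop :=
  Nonempty (ProjFactorization A f)

section Aux

variable {k : Type u} {A : Type v} [Field k] [Ring A] [Algebra k A]

theorem mem_spanOp_iff (a : A) {z : A} :
    z ∈ Submodule.span Aᵐᵒᵖ ({a} : Set A) ↔ ∃ x, z = a * x := by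
  rw [Submodule.mem_span_singleton]
  constructor
  · rintro ⟨r, rfl⟩
    exact ⟨r.unop, rfl⟩
  · rintro ⟨x, rfl⟩
    exact ⟨MulOpposite.op x, rfl⟩

theorem mem_spanL_iff (a : A) {z : A} :
    z ∈ Submodule.span A ({a} : Set A) ↔ ∃ d, d * a = z := by
  rw [Submodule.mem_span_singleton]; rfl

theorem theta_apply {a : A}
    (θ : (Submodule.span Aᵐᵒᵖ ({a} : Set A)) →ₗ[Aᵐᵒᵖ]
      ((Submodule.span A ({a} : Set A)) →ₗ[A] A))
    (hθ : ∀ (x : A) (hx : a * x ∈ Submodule.span Aᵐᵒᵖ ({a} : Set A))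
      (y : Submodule.span A ({a} : Set A)), θ ⟨a * x, hx⟩ y = (y : A) * x)
    (z : Submodule.span Aᵐᵒᵖ ({a} : Set A))
    (y : Submodule.span A ({a} : Set A)) (d : A) (hd : d * a = (y : A)) :
    θ z y = d * (z : A) := by
  obtain ⟨x, hx⟩ := (mem_spanOp_iff a).1 z.2
  have hz : z = ⟨a * x, hx ▸ z.2⟩ := Subtype.ext hx
  rw [hz, hθ x _ y]
  simp only [← hd, mul_assoc]

theorem theta_mem {a : A}
    (θ : (Submodule.span Aᵐᵒᵖ ({a} : Set A)) →ₗ[Aᵐᵒᵖ]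
      ((Submodule.span A ({a} : Set A)) →ₗ[A] A))
    (hθ : ∀ (x : A) (hx : a * x ∈ Submodule.span Aᵐᵒᵖ ({a} : Set A))
      (y : Submodule.span A ({a} : Set A)), θ ⟨a * x, hx⟩ y = (y : A) * x)
    (b : A) (z : Submodule.span Aᵐᵒᵖ ({a} : Set A))
    (hzb : (z : A) ∈ Submodule.span A ({b} : Set A))
    (y : Submodule.span A ({a} : Set A)) :
    θ z y ∈ Submodule.span A ({b} : Set A) := by
  obtain ⟨d, hd⟩ := (mem_spanL_iff a).1 y.2
  rw [theta_apply θ hθ z y d hd]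
  simpa using Submodule.smul_mem _ d hzb

def Phi0 (k : Type u) {A : Type v} [Field k] [Ring A] [Algebra k A] {a : A}
    (θ : (Submodule.span Aᵐᵒᵖ ({a} : Set A)) →ₗ[Aᵐᵒᵖ]
      ((Submodule.span A ({a} : Set A)) →ₗ[A] A))
    (hθ : ∀ (x : A) (hx : a * x ∈ Submodule.span Aᵐᵒᵖ ({a} : Set A))
      (y : Submodule.span A ({a} : Set A)), θ ⟨a * x, hx⟩ y = (y : A) * x)
    (b : A) :
    ↥((Submodule.span Aᵐᵒᵖ ({a} : Set A)).restrictScalars k ⊓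
      (Submodule.span A ({b} : Set A)).restrictScalars k) →ₗ[k]
    ((Submodule.span A ({a} : Set A)) →ₗ[A] (Submodule.span A ({b} : Set A))) where
  toFun z := LinearMap.codRestrict _ (θ ⟨z.1, z.2.1⟩)
    (fun y => theta_mem θ hθ b ⟨z.1, z.2.1⟩ z.2.2 y)
  map_add' z w := by
    ext y
    obtain ⟨d, hd⟩ := (mem_spanL_iff (A := A) _).1 y.2
    simp only [LinearMap.codRestrict_apply, LinearMap.add_apply, Submodule.coe_add,
      AddSubmonoid.coe_add]
    rw [theta_apply θ hθ _ y d hd, theta_apply θ hθ _ y d hd, theta_apply θ hθ _ y d hd]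
    simp [mul_add]
  map_smul' c z := by
    ext y
    obtain ⟨d, hd⟩ := (mem_spanL_iff (A := A) _).1 y.2
    simp only [LinearMap.codRestrict_apply, RingHom.id_apply, LinearMap.smul_apply,
      SetLike.val_smul, Submodule.coe_smul_of_tower]
    rw [theta_apply θ hθ _ y d hd, theta_apply θ hθ _ y d hd]
    exact mul_smul_comm c d _

theorem Phi0_apply_coe (k : Type u) {A : Type v} [Field k] [Ring A] [Algebra k A] {a : A}
    (θ : (Submodule.span Aᵐᵒᵖ ({a} : Set A)) →ₗ[Aᵐᵒᵖ]
      ((Submodule.span A ({a} : Set A)) →ₗ[A] A))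
    (hθ : ∀ (x : A) (hx : a * x ∈ Submodule.span Aᵐᵒᵖ ({a} : Set A))
      (y : Submodule.span A ({a} : Set A)), θ ⟨a * x, hx⟩ y = (y : A) * x)
    (b : A)
    (z : ↥((Submodule.span Aᵐᵒᵖ ({a} : Set A)).restrictScalars k ⊓
      (Submodule.span A ({b} : Set A)).restrictScalars k))
    (y : Submodule.span A ({a} : Set A)) :
    ((Phi0 k θ hθ b z y : Submodule.span A ({b} : Set A)) : A) = θ ⟨z.1, z.2.1⟩ y := rfl

end Aux

section Main

variable {k : Type u} {A : Type v} [Field k] [Ring A] [Algebra k A]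

/-- Right multiplication by `b`, `A → Ab`, as a surjection from the free module `A`. -/
def piB (b : A) : A →ₗ[A] (Submodule.span A ({b} : Set A)) :=
  LinearMap.codRestrict _ (LinearMap.toSpanSingleton A A b)
    (fun w => (mem_spanL_iff b).2 ⟨w, rfl⟩)

theorem piB_surj (b : A) : Function.Surjective (piB (A := A) b) := by
  intro w
  obtain ⟨d, hd⟩ := (mem_spanL_iff b).1 w.2
  exact ⟨d, Subtype.ext hd⟩

/-- The homs `Aa → Ab` factoring through a projective, as a `k`-submodule. -/
def projSub (k : Type u) (A : Type v) [Field k] [Ring A] [Algebra k A] (a b : A) :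
    Submodule k ((Submodule.span A ({a} : Set A)) →ₗ[A] (Submodule.span A ({b} : Set A))) where
  carrier := {f | FactorsThroughProjective A f}
  zero_mem' := ⟨⟨A, inferInstance, 0, 0, by simp⟩⟩
  add_mem' := by
    rintro f₁ f₂ ⟨F₁⟩ ⟨F₂⟩
    letI := F₁.acg; letI := F₁.mod; letI := F₂.acg; letI := F₂.mod
    letI := F₁.proj; letI := F₂.proj
    refine ⟨⟨F₁.Q × F₂.Q, inferInstance, F₁.g.prod F₂.g,
      F₁.h.comp (LinearMap.fst A _ _) + F₂.h.comp (LinearMap.snd A _ _), ?_⟩⟩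
    ext y
    have e1 := LinearMap.congr_fun F₁.fac y
    have e2 := LinearMap.congr_fun F₂.fac y
    simp only [LinearMap.add_apply, Submodule.coe_add, e1, e2, LinearMap.comp_apply,
      LinearMap.fst_apply, LinearMap.snd_apply, LinearMap.prod_apply, Function.prod]
  smul_mem' := by
    rintro c f ⟨F⟩
    letI := F.acg; letI := F.mod
    refine ⟨⟨F.Q, F.proj, F.g, c • F.h, ?_⟩⟩
    ext y
    have e := LinearMap.congr_fun F.fac y
    simp only [LinearMap.smul_apply, SetLike.val_smul, e, LinearMap.comp_apply]

theorem span_factors_eq (a b : A) :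
    Submodule.span k {f : (Submodule.span A ({a} : Set A)) →ₗ[A]
        (Submodule.span A ({b} : Set A)) | FactorsThroughProjective A f} = projSub k A a b :=
  Submodule.span_eq (projSub k A a b)

end Main

section Core

variable {k : Type u} {A : Type v} [Field k] [Ring A] [Algebra k A] {a : A}
  (θ : (Submodule.span Aᵐᵒᵖ ({a} : Set A)) →ₗ[Aᵐᵒᵖ]
    ((Submodule.span A ({a} : Set A)) →ₗ[A] A))

/-- Surjectivity: every `f : Aa → Ab` is `Phi0` of some element of `aA ∩ Ab`. -/
theorem Phi0_surj
    (hθ : ∀ (x : A) (hx : a * x ∈ Submodule.span Aᵐᵒᵖ ({a} : Set A))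
      (y : Submodule.span A ({a} : Set A)), θ ⟨a * x, hx⟩ y = (y : A) * x)
    (hbij : Function.Bijective θ) (b : A)
    (f : (Submodule.span A ({a} : Set A)) →ₗ[A] (Submodule.span A ({b} : Set A))) :
    ∃ z, Phi0 k θ hθ b z = f := by
  obtain ⟨w, hw⟩ := hbij.2 ((Submodule.span A ({b} : Set A)).subtype.comp f)
  have ha : a ∈ Submodule.span A ({a} : Set A) := Submodule.mem_span_singleton_self a
  have hwval : θ w ⟨a, ha⟩ = (w : A) := by
    rw [theta_apply θ hθ w ⟨a, ha⟩ 1 (one_mul a)]; exact one_mul _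
  have hwb : (w : A) ∈ Submodule.span A ({b} : Set A) := by
    rw [← hwval, hw]
    exact (f ⟨a, ha⟩).2
  refine ⟨⟨(w : A), ⟨w.2, hwb⟩⟩, ?_⟩
  refine LinearMap.ext fun y => Subtype.ext ?_
  have : (⟨(w : A), w.2⟩ : Submodule.span Aᵐᵒᵖ ({a} : Set A)) = w := rfl
  rw [Phi0_apply_coe, this, hw]
  rfl

/-- Injectivity: if `Phi0 z` factors through a projective, then `z ∈ aAb`. -/
theorem factors_mem
    (hθ : ∀ (x : A) (hx : a * x ∈ Submodule.span Aᵐᵒᵖ ({a} : Set A))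
      (y : Submodule.span A ({a} : Set A)), θ ⟨a * x, hx⟩ y = (y : A) * x)
    (hbij : Function.Bijective θ) (b : A)
    (z : ↥((Submodule.span Aᵐᵒᵖ ({a} : Set A)).restrictScalars k ⊓
      (Submodule.span A ({b} : Set A)).restrictScalars k))
    (hf : FactorsThroughProjective A (Phi0 k θ hθ b z)) :
    (z : A) ∈ Submodule.span k {z : A | ∃ x : A, z = a * x * b} := by
  obtain ⟨F⟩ := hf
  letI := F.acg; letI := F.mod; letI := F.proj
  obtain ⟨h', hh'⟩ := Module.projective_lifting_property (piB b) F.h (piB_surj b)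
  obtain ⟨w, hw⟩ := hbij.2 (h'.comp F.g)
  obtain ⟨x, hx⟩ := (mem_spanOp_iff a).1 w.2
  have hmem : a * (x * b) ∈ Submodule.span Aᵐᵒᵖ ({a} : Set A) :=
    (mem_spanOp_iff a).2 ⟨x * b, rfl⟩
  have key : (⟨(z : A), z.2.1⟩ : Submodule.span Aᵐᵒᵖ ({a} : Set A)) = ⟨a * (x * b), hmem⟩ := by
    apply hbij.1
    refine LinearMap.ext fun y => ?_
    rw [hθ (x * b) hmem y]
    have e1 : θ ⟨(z : A), z.2.1⟩ y = ((Phi0 k θ hθ b z) y : A) := rfl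
    have e2 := LinearMap.congr_fun F.fac y
    have e3 := LinearMap.congr_fun hh' (F.g y)
    have e4 := LinearMap.congr_fun hw y
    have e5 : θ w y = (y : A) * x := by
      have : w = ⟨a * x, hx ▸ w.2⟩ := Subtype.ext hx
      rw [this, hθ x _ y]
    rw [e1, e2]
    have : ((F.h (F.g y) : Submodule.span A ({b} : Set A)) : A)
        = ((piB b (h' (F.g y)) : Submodule.span A ({b} : Set A)) : A) := by
      rw [← hh']; rfl
    rw [LinearMap.comp_apply, this]
    have : ((piB b (h' (F.g y)) : Submodule.span A ({b} : Set A)) : A) = h' (F.g y) * b := rfl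
    rw [this, ← LinearMap.comp_apply, ← hw, e5, mul_assoc]
  have hz : (z : A) = a * x * b := by
    have := congrArg Subtype.val key
    simpa [mul_assoc] using this
  rw [hz]
  exact Submodule.subset_span ⟨x, rfl⟩

/-- Elements of `aAb` give maps factoring through a projective. -/
theorem mapsIn
    (hθ : ∀ (x : A) (hx : a * x ∈ Submodule.span Aᵐᵒᵖ ({a} : Set A))
      (y : Submodule.span A ({a} : Set A)), θ ⟨a * x, hx⟩ y = (y : A) * x)
    (b : A)
    (z : ↥((Submodule.span Aᵐᵒᵖ ({a} : Set A)).restrictScalars k ⊓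
      (Submodule.span A ({b} : Set A)).restrictScalars k))
    (hz : (z : A) ∈ Submodule.span k {z : A | ∃ x : A, z = a * x * b}) :
    Phi0 k θ hθ b z ∈ projSub k A a b := by
  have hsub : Submodule.span k {z : A | ∃ x : A, z = a * x * b} ≤
      ((Submodule.span Aᵐᵒᵖ ({a} : Set A)).restrictScalars k ⊓
        (Submodule.span A ({b} : Set A)).restrictScalars k) := by
    rw [Submodule.span_le]
    rintro v ⟨x, rfl⟩
    exact ⟨(mem_spanOp_iff a).2 ⟨x * b, mul_assoc a x b⟩,
      (mem_spanL_iff b).2 ⟨a * x, rfl⟩⟩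
  have main : ∀ (v : A) (hv : v ∈ Submodule.span k {z : A | ∃ x : A, z = a * x * b})
      (hv' : v ∈ ((Submodule.span Aᵐᵒᵖ ({a} : Set A)).restrictScalars k ⊓
        (Submodule.span A ({b} : Set A)).restrictScalars k)),
      Phi0 k θ hθ b ⟨v, hv'⟩ ∈ projSub k A a b := by
    intro v hv
    induction hv using Submodule.span_induction with
    | mem v hvgen =>
      intro hv'
      obtain ⟨x, rfl⟩ := hvgen
      refine ⟨⟨A, inferInstance,
        (LinearMap.toSpanSingleton A A x).comp (Submodule.span A ({a} : Set A)).subtype,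
        piB b, ?_⟩⟩
      refine LinearMap.ext fun y => Subtype.ext ?_
      rw [Phi0_apply_coe]
      have h1 : (⟨a * x * b, hv'.1⟩ : Submodule.span Aᵐᵒᵖ ({a} : Set A))
          = ⟨a * (x * b), (mem_spanOp_iff a).2 ⟨x * b, rfl⟩⟩ := Subtype.ext (mul_assoc a x b)
      rw [h1, hθ (x * b) _ y]
      show (y : A) * (x * b) = ((y : A) • x) * b
      rw [smul_eq_mul, mul_assoc]
    | zero =>
      intro hv'
      have : (⟨(0 : A), hv'⟩ : ↥((Submodule.span Aᵐᵒᵖ ({a} : Set A)).restrictScalars k ⊓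
          (Submodule.span A ({b} : Set A)).restrictScalars k)) = 0 := rfl
      rw [this, map_zero]
      exact (projSub k A a b).zero_mem
    | add v w hv hw ihv ihw =>
      intro hvw'
      have h1 : (⟨v + w, hvw'⟩ : ↥((Submodule.span Aᵐᵒᵖ ({a} : Set A)).restrictScalars k ⊓
          (Submodule.span A ({b} : Set A)).restrictScalars k))
          = ⟨v, hsub hv⟩ + ⟨w, hsub hw⟩ := rfl
      rw [h1, map_add]
      exact (projSub k A a b).add_mem (ihv (hsub hv)) (ihw (hsub hw))
    | smul c v hv ihv =>
      intro hv'
      have h1 : (⟨c • v, hv'⟩ : ↥((Submodule.span Aᵐᵒᵖ ({a} : Set A)).restrictScalars k ⊓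
          (Submodule.span A ({b} : Set A)).restrictScalars k)) = c • ⟨v, hsub hv⟩ := rfl
      rw [h1, map_smul]
      exact (projSub k A a b).smul_mem c (ihv (hsub hv))
  have := main (z : A) hz z.2
  simpa using this

end Core

/-- If `θ_a : aA → Hom_A(Aa, A)` is an isomorphism, then it induces a `k`-linear
isomorphism `(aA ∩ Ab)/(aAb) ≅ Hom-underline_A(Aa, Ab)`, the quotient of
`Hom_A(Aa, Ab)` by the homomorphisms factoring through a projective module. -/
theorem theta_induces_stable_hom_iso (k : Type u) (A : Type v) [Field k] [Ring A]
    [Algebra k A] [FiniteDimensional k A] (a b : A)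
    (θ : (Submodule.span Aᵐᵒᵖ ({a} : Set A)) →ₗ[Aᵐᵒᵖ]
        ((Submodule.span A ({a} : Set A)) →ₗ[A] A))
    (hθ : ∀ (x : A) (hx : a * x ∈ Submodule.span Aᵐᵒᵖ ({a} : Set A))
        (y : Submodule.span A ({a} : Set A)), θ ⟨a * x, hx⟩ y = (y : A) * x)
    (hbij : Function.Bijective θ) :
    ∃ Φ : (↥((Submodule.span Aᵐᵒᵖ ({a} : Set A)).restrictScalars k ⊓
            (Submodule.span A ({b} : Set A)).restrictScalars k) ⧸
          (Submodule.comap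
            ((Submodule.span Aᵐᵒᵖ ({a} : Set A)).restrictScalars k ⊓
              (Submodule.span A ({b} : Set A)).restrictScalars k).subtype
            (Submodule.span k {z : A | ∃ x : A, z = a * x * b}))) ≃ₗ[k]
        (((Submodule.span A ({a} : Set A)) →ₗ[A] (Submodule.span A ({b} : Set A))) ⧸
          (Submodule.span k
            {f : (Submodule.span A ({a} : Set A)) →ₗ[A] (Submodule.span A ({b} : Set A)) |
              FactorsThroughProjective A f})),
      ∀ (x : A)
        (hmem : a * x ∈ (Submodule.span Aᵐᵒᵖ ({a} : Set A)).restrictScalars k ⊓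
          (Submodule.span A ({b} : Set A)).restrictScalars k)
        (f : (Submodule.span A ({a} : Set A)) →ₗ[A] (Submodule.span A ({b} : Set A))),
        (∀ y : Submodule.span A ({a} : Set A), ((f y : A) = (y : A) * x)) →
        Φ (Submodule.Quotient.mk ⟨a * x, hmem⟩) = Submodule.Quotient.mk f := by
  have hN : Submodule.comap
      ((Submodule.span Aᵐᵒᵖ ({a} : Set A)).restrictScalars k ⊓
        (Submodule.span A ({b} : Set A)).restrictScalars k).subtype
      (Submodule.span k {z : A | ∃ x : A, z = a * x * b}) ≤
      LinearMap.ker ((Submodule.span k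
        {f : (Submodule.span A ({a} : Set A)) →ₗ[A] (Submodule.span A ({b} : Set A)) |
          FactorsThroughProjective A f}).mkQ.comp (Phi0 k θ hθ b)) := by
    intro z hz
    rw [LinearMap.mem_ker, LinearMap.comp_apply, Submodule.mkQ_apply,
      Submodule.Quotient.mk_eq_zero, span_factors_eq]
    exact mapsIn θ hθ b z hz
  refine ⟨LinearEquiv.ofBijective (Submodule.liftQ _
      ((Submodule.span k
        {f : (Submodule.span A ({a} : Set A)) →ₗ[A] (Submodule.span A ({b} : Set A)) |
          FactorsThroughProjective A f}).mkQ.comp (Phi0 k θ hθ b)) hN) ⟨?_, ?_⟩, ?_⟩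
  · rw [← LinearMap.ker_eq_bot]
    apply Submodule.ker_liftQ_eq_bot
    intro z hz
    rw [LinearMap.mem_ker, LinearMap.comp_apply, Submodule.mkQ_apply,
      Submodule.Quotient.mk_eq_zero, span_factors_eq] at hz
    exact factors_mem θ hθ hbij b z hz
  · intro q
    obtain ⟨f, rfl⟩ := Submodule.mkQ_surjective _ q
    obtain ⟨z, hz⟩ := Phi0_surj (k := k) θ hθ hbij b f
    exact ⟨Submodule.Quotient.mk z,
      by rw [Submodule.liftQ_apply, LinearMap.comp_apply, hz, Submodule.mkQ_apply]⟩
  · intro x hmem f hf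
    have hfe : Phi0 k θ hθ b ⟨a * x, hmem⟩ = f := by
      refine LinearMap.ext fun y => Subtype.ext ?_
      rw [Phi0_apply_coe]
      exact (hθ x hmem.1 y).trans (hf y).symm
    erw [LinearEquiv.ofBijective_apply]
    rw [Submodule.liftQ_apply, LinearMap.comp_apply, hfe,
      Submodule.mkQ_apply]
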